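/- arXiv:2407.12252 — 4 statements merged into one kernel-verified Lean document; each statement's English description precedes it below -/
import Mathlib

section
/- Let E be a complex Banach space, λ₀ > 0 and C > 0. Let F : ℂ → E be holomorphic on the half-plane {λ ∈ ℂ : Re λ > λ₀} and satisfy ‖F(λ)‖_E ≤ C|λ|^{−1} there. Then for every γ > λ₀ and every t < 0 one has lim_{R→∞} ∫_{−R}^{R} e^{(γ+iτ)t} F(γ+iτ) dτ = 0; in other words, the inverse Laplace transform of F, taken as the limit of symmetric truncations of the vertical-line integral, vanishes for negative times. -/
open MeasureTheory

set_option maxHeartbeats 1000000 in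
/-- If `F` is holomorphic on the half-plane `{Re λ > λ₀}` of a complex Banach space `E`
with `‖F(λ)‖ ≤ C|λ|⁻¹` there, then for every `γ > λ₀` and every `t < 0` the inverse
Laplace transform of `F`, taken as the limit of symmetric truncations of the
vertical-line integral, vanishes:
`lim_{R→∞} ∫_{−R}^{R} e^{(γ+iτ)t} F(γ+iτ) dτ = 0`. -/
theorem stmt_1 {E : Type*} [NormedAddCommGroup E] [NormedSpace ℂ E] [CompleteSpace E]
    (lam0 C : ℝ) (hlam0 : 0 < lam0) (hC : 0 < C) (F : ℂ → E)
    (hol : DifferentiableOn ℂ F {l : ℂ | lam0 < l.re})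
    (hbd : ∀ l : ℂ, lam0 < l.re → ‖F l‖ ≤ C * ‖l‖⁻¹)
    (γ : ℝ) (hγ : lam0 < γ) (t : ℝ) (ht : t < 0) :
    Filter.Tendsto
      (fun R : ℝ => ∫ τ in (-R)..R,
        Complex.exp (((γ : ℂ) + (τ : ℂ) * Complex.I) * (t : ℂ)) •
          F ((γ : ℂ) + (τ : ℂ) * Complex.I))
      Filter.atTop (nhds 0) := by
  have hγ0 : 0 < γ := hlam0.trans hγ
  set f : ℂ → E := fun l => Complex.exp (l * (t : ℂ)) • F l with hf
  -- norm of f at points with Re > lam0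
  have hnormf : ∀ l : ℂ, lam0 < l.re → ‖f l‖ ≤ Real.exp (l.re * t) * (C * ‖l‖⁻¹) := by
    intro l hl
    rw [hf]
    simp only [norm_smul, Complex.norm_exp]
    have hre : (l * (t : ℂ)).re = l.re * t := by simp
    rw [hre]
    exact mul_le_mul_of_nonneg_left (hbd l hl) (Real.exp_pos _).le
  have key : ∀ R : ℝ, 1 ≤ R →
      ‖∫ τ in (-R)..R,
        Complex.exp (((γ : ℂ) + (τ : ℂ) * Complex.I) * (t : ℂ)) •
          F ((γ : ℂ) + (τ : ℂ) * Complex.I)‖ ≤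
        2 * (C * R⁻¹ * (Real.exp (γ * t) * (-t)⁻¹)) +
          2 * C * Real.exp (γ * t) * Real.exp (R * t) := by
    intro R hR
    have hR0 : 0 < R := lt_of_lt_of_le one_pos hR
    have hle : γ ≤ γ + R := by linarith
    -- Cauchy for the rectangle [γ, γ+R] × [-R, R]
    have hdiff : DifferentiableOn ℂ f (Set.uIcc γ (γ + R) ×ℂ Set.uIcc (-R) R) := by
      apply DifferentiableOn.smul
      · exact (Complex.differentiable_exp.comp
          (differentiable_id.mul_const _)).differentiableOn
      · apply hol.mono
        intro l hl
        rw [Complex.mem_reProdIm] at hl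
        have h1 := hl.1
        rw [Set.uIcc_of_le hle] at h1
        exact lt_of_lt_of_le hγ h1.1
    have hrect0 := Complex.integral_boundary_rect_eq_zero_of_differentiableOn f
      (⟨γ, -R⟩ : ℂ) (⟨γ + R, R⟩ : ℂ) hdiff
    have hrect :
        (∫ x : ℝ in γ..(γ + R), f ((x : ℂ) + ((-R : ℝ) : ℂ) * Complex.I)) -
            (∫ x : ℝ in γ..(γ + R), f ((x : ℂ) + ((R : ℝ) : ℂ) * Complex.I)) +
          Complex.I • (∫ y : ℝ in (-R)..R, f (((γ + R : ℝ) : ℂ) + (y : ℝ) * Complex.I)) -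
          Complex.I • (∫ y : ℝ in (-R)..R, f ((γ : ℂ) + (y : ℝ) * Complex.I)) = 0 := hrect0
    set B := ∫ x : ℝ in γ..(γ + R), f ((x : ℂ) + ((-R : ℝ) : ℂ) * Complex.I) with hB
    set T := ∫ x : ℝ in γ..(γ + R), f ((x : ℂ) + ((R : ℝ) : ℂ) * Complex.I) with hT
    set Rt := ∫ y : ℝ in (-R)..R, f (((γ + R : ℝ) : ℂ) + (y : ℝ) * Complex.I) with hRt
    set L := ∫ y : ℝ in (-R)..R, f ((γ : ℂ) + (y : ℝ) * Complex.I) with hL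
    have hident : Complex.I • L = B - T + Complex.I • Rt :=
      (sub_eq_zero.mp hrect).symm
    have hLnorm : ‖L‖ = ‖Complex.I • L‖ := by
      rw [norm_smul, Complex.norm_I, one_mul]
    -- bound the horizontal sides
    have hhoriz : ∀ s : ℝ, |s| = R →
        ‖∫ x : ℝ in γ..(γ + R), f ((x : ℂ) + ((s : ℝ) : ℂ) * Complex.I)‖ ≤
          C * R⁻¹ * (Real.exp (γ * t) * (-t)⁻¹) := by
      intro s hs
      have hb : ‖∫ x : ℝ in γ..(γ + R), f ((x : ℂ) + ((s : ℝ) : ℂ) * Complex.I)‖ ≤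
          |∫ x : ℝ in γ..(γ + R), C * R⁻¹ * Real.exp (x * t)| := by
        apply intervalIntegral.norm_integral_le_abs_of_norm_le
        · rw [Set.uIoc_of_le hle]
          filter_upwards [ae_restrict_mem measurableSet_Ioc] with x hx
          have hxγ : γ < x := hx.1
          have hre : ((x : ℂ) + ((s : ℝ) : ℂ) * Complex.I).re = x := by simp
          have him : ((x : ℂ) + ((s : ℝ) : ℂ) * Complex.I).im = s := by simp
          have habs : R ≤ ‖(x : ℂ) + ((s : ℝ) : ℂ) * Complex.I‖ := by
            calc R = |((x : ℂ) + ((s : ℝ) : ℂ) * Complex.I).im| := by rw [him, hs]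
              _ ≤ _ := Complex.abs_im_le_norm _
          have h1 := hnormf ((x : ℂ) + ((s : ℝ) : ℂ) * Complex.I) (by rw [hre]; linarith)
          rw [hre] at h1
          refine h1.trans ?_
          have hinv : (‖(x : ℂ) + ((s : ℝ) : ℂ) * Complex.I‖)⁻¹ ≤ R⁻¹ :=
            inv_anti₀ hR0 habs
          calc Real.exp (x * t) * (C * (‖(x : ℂ) + ((s : ℝ) : ℂ) * Complex.I‖)⁻¹)
              ≤ Real.exp (x * t) * (C * R⁻¹) := by
                exact mul_le_mul_of_nonneg_left
                  (mul_le_mul_of_nonneg_left hinv hC.le) (Real.exp_pos _).le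
            _ = C * R⁻¹ * Real.exp (x * t) := by ring
        · exact (Continuous.intervalIntegrable (by continuity) _ _)
      refine hb.trans ?_
      have hint : ∫ x : ℝ in γ..(γ + R), C * R⁻¹ * Real.exp (x * t) =
          C * R⁻¹ * (t⁻¹ * (Real.exp ((γ + R) * t) - Real.exp (γ * t))) := by
        rw [intervalIntegral.integral_const_mul]
        congr 1
        rw [intervalIntegral.integral_comp_mul_right Real.exp ht.ne, integral_exp,
          smul_eq_mul]
      rw [hint]
      have hnegt : (0 : ℝ) ≤ (-t)⁻¹ := inv_nonneg.2 (by linarith)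
      have htinv : t⁻¹ = -(-t)⁻¹ := by
        rw [inv_neg, neg_neg]
      have he2 : (0 : ℝ) < Real.exp ((γ + R) * t) := Real.exp_pos _
      have he1' : Real.exp ((γ + R) * t) ≤ Real.exp (γ * t) :=
        Real.exp_le_exp.2 (by nlinarith)
      have hnn : 0 ≤ t⁻¹ * (Real.exp ((γ + R) * t) - Real.exp (γ * t)) := by
        rw [htinv]; nlinarith
      rw [abs_of_nonneg (mul_nonneg (by positivity) hnn)]
      apply mul_le_mul_of_nonneg_left _ (by positivity : (0 : ℝ) ≤ C * R⁻¹)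
      rw [htinv]; nlinarith
    -- bound the right side
    have hright : ‖Rt‖ ≤ 2 * C * Real.exp (γ * t) * Real.exp (R * t) := by
      have hb : ‖Rt‖ ≤ Real.exp ((γ + R) * t) * (C * (γ + R)⁻¹) * |R - (-R)| := by
        rw [hRt]
        apply intervalIntegral.norm_integral_le_of_norm_le_const
        intro y hy
        have hre : (((γ + R : ℝ) : ℂ) + (y : ℝ) * Complex.I).re = γ + R := by simp
        have habs : γ + R ≤ ‖((γ + R : ℝ) : ℂ) + (y : ℝ) * Complex.I‖ := by
          calc γ + R = (((γ + R : ℝ) : ℂ) + (y : ℝ) * Complex.I).re := hre.symm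
            _ ≤ _ := Complex.re_le_norm _
        have h1 := hnormf (((γ + R : ℝ) : ℂ) + (y : ℝ) * Complex.I) (by rw [hre]; linarith)
        rw [hre] at h1
        refine h1.trans ?_
        exact mul_le_mul_of_nonneg_left
          (mul_le_mul_of_nonneg_left (inv_anti₀ (by linarith) habs) hC.le)
          (Real.exp_pos _).le
      refine hb.trans ?_
      have habsR : |R - (-R)| = 2 * R := by
        rw [abs_of_nonneg (by linarith)]; ring
      rw [habsR]
      have hfrac : 2 * R * (γ + R)⁻¹ ≤ 2 := by
        rw [mul_inv_le_iff₀ (by linarith : (0 : ℝ) < γ + R)]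
        linarith
      have hexp : Real.exp ((γ + R) * t) = Real.exp (γ * t) * Real.exp (R * t) := by
        rw [← Real.exp_add]; ring_nf
      calc Real.exp ((γ + R) * t) * (C * (γ + R)⁻¹) * (2 * R)
          = (2 * R * (γ + R)⁻¹) * (C * Real.exp ((γ + R) * t)) := by ring
        _ ≤ 2 * (C * Real.exp ((γ + R) * t)) := by
            apply mul_le_mul_of_nonneg_right hfrac (by positivity)
        _ = 2 * C * Real.exp (γ * t) * Real.exp (R * t) := by rw [hexp]; ring
    -- combine
    have hgoal : (∫ τ in (-R)..R,
        Complex.exp (((γ : ℂ) + (τ : ℂ) * Complex.I) * (t : ℂ)) •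
          F ((γ : ℂ) + (τ : ℂ) * Complex.I)) = L := rfl
    rw [hLnorm, hident]
    have hRtI : ‖Complex.I • Rt‖ = ‖Rt‖ := by
      rw [norm_smul, Complex.norm_I, one_mul]
    calc ‖B - T + Complex.I • Rt‖ ≤ ‖B - T‖ + ‖Complex.I • Rt‖ := norm_add_le _ _
      _ ≤ ‖B‖ + ‖T‖ + ‖Rt‖ := by
          rw [hRtI]
          exact add_le_add_left (norm_sub_le _ _) _
      _ ≤ (C * R⁻¹ * (Real.exp (γ * t) * (-t)⁻¹)) +
            (C * R⁻¹ * (Real.exp (γ * t) * (-t)⁻¹)) +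
            (2 * C * Real.exp (γ * t) * Real.exp (R * t)) := by
          exact add_le_add (add_le_add
            (hhoriz (-R) (by rw [abs_neg, abs_of_nonneg hR0.le]))
            (hhoriz R (abs_of_nonneg hR0.le))) hright
      _ = 2 * (C * R⁻¹ * (Real.exp (γ * t) * (-t)⁻¹)) +
            2 * C * Real.exp (γ * t) * Real.exp (R * t) := by ring
  -- squeeze
  apply squeeze_zero_norm' (Filter.eventually_atTop.2 ⟨1, key⟩)
  have h1 : Filter.Tendsto (fun R : ℝ => 2 * (C * R⁻¹ * (Real.exp (γ * t) * (-t)⁻¹)))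
      Filter.atTop (nhds 0) := by
    have := ((tendsto_inv_atTop_zero (𝕜 := ℝ)).const_mul C).mul_const
      (Real.exp (γ * t) * (-t)⁻¹) |>.const_mul 2
    simpa using this
  have h2 : Filter.Tendsto (fun R : ℝ => 2 * C * Real.exp (γ * t) * Real.exp (R * t))
      Filter.atTop (nhds 0) := by
    have hexp : Filter.Tendsto (fun R : ℝ => Real.exp (R * t)) Filter.atTop (nhds 0) :=
      Real.tendsto_exp_atBot.comp (Filter.tendsto_id.atTop_mul_const_of_neg ht)
    simpa using hexp.const_mul (2 * C * Real.exp (γ * t))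
  simpa using h1.add h2
end

section
/- Let ε ∈ (0, π/2), α > 0 and β ∈ ℝ with α + β > 0. For λ ∈ Σ_ε and ξ′ ∈ ℝ^{N−1} (N ≥ 2) set A = √((α+β)^{−1}λ + |ξ′|²) and B = √(α^{−1}λ + |ξ′|²), taking principal square roots, and let L(λ, ξ′) = (α+β)A + αB be the Lopatinski determinant. Then there exist constants c₁, c₂ > 0, depending only on ε, α and β, such that c₁ (|λ|^{1/2} + |ξ′|) ≤ Re L(λ, ξ′) ≤ |L(λ, ξ′)| ≤ c₂ (|λ|^{1/2} + |ξ′|) for all λ ∈ Σ_ε and ξ′ ∈ ℝ^{N−1}. In particular L(λ, ξ′) ≠ 0. -/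
set_option maxHeartbeats 1000000

noncomputable def Kc (ε : ℝ) : ℝ :=
  min (Real.sqrt ((1 - Real.cos ε) / 2)) ((Real.sin ε) ^ 2 / 6)

lemma Kc_pos {ε : ℝ} (hε1 : 0 < ε) (hε2 : ε < Real.pi / 2) : 0 < Kc ε := by
  have hs' : 0 < Real.sin ε := Real.sin_pos_of_pos_of_lt_pi hε1
    (by nlinarith [Real.pi_pos])
  have hc1 : Real.cos ε < 1 := by
    nlinarith [Real.sin_sq_add_cos_sq ε, Real.cos_le_one ε]
  exact lt_min (Real.sqrt_pos.mpr (by linarith)) (by positivity)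

lemma core_pos (ε : ℝ) (hε1 : 0 < ε) (hε2 : ε < Real.pi / 2) (s a x y r : ℝ)
    (hs : 0 < s) (ha : 0 < a) (hr : 0 ≤ r)
    (hxy : x ^ 2 + y ^ 2 = a ^ 2) (hx : -(a * Real.cos ε) ≤ x) {T : ℝ}
    (hT0 : 0 ≤ T) (hT2 : T ^ 2 = (s * x + r) ^ 2 + (s * y) ^ 2) :
    Real.sqrt ((1 - Real.cos ε) / 2) * (s * a + r) ≤ T := by
  have hcpos : 0 < Real.cos ε := Real.cos_pos_of_mem_Ioo
    ⟨by linarith [Real.pi_pos], hε2⟩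
  have hc1 : Real.cos ε ≤ 1 := Real.cos_le_one ε
  set c := Real.cos ε with hc
  set q := Real.sqrt ((1 - c) / 2) with hqdef
  have hq0 : 0 ≤ q := Real.sqrt_nonneg _
  have hq2 : q ^ 2 = (1 - c) / 2 := Real.sq_sqrt (by linarith)
  have hsar : 0 ≤ s * a + r := by positivity
  have h1 : 0 ≤ s * r * (x + a * c) := by
    apply mul_nonneg (by positivity); linarith
  have hsq : (q * (s * a + r)) ^ 2 ≤ T ^ 2 := by
    have e1 : (s * x + r) ^ 2 + (s * y) ^ 2
        = s ^ 2 * (x ^ 2 + y ^ 2) + 2 * s * x * r + r ^ 2 := by ring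
    rw [mul_pow, hq2, hT2, e1, hxy]
    nlinarith [h1, mul_nonneg (by linarith : (0:ℝ) ≤ 1 + c) (sq_nonneg (s * a - r))]
  nlinarith [mul_nonneg hq0 hsar]

lemma core_neg (ε : ℝ) (hε1 : 0 < ε) (hε2 : ε < Real.pi / 2) (s a x y r : ℝ)
    (hs : 0 < s) (ha : 0 < a) (hr : 0 ≤ r)
    (hxy : x ^ 2 + y ^ 2 = a ^ 2) (hx : -(a * Real.cos ε) ≤ x) {T : ℝ}
    (hT0 : 0 ≤ T) (hT2 : T ^ 2 = (s * x + r) ^ 2 + (s * y) ^ 2)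
    (hneg : s * x + r < 0) :
    Real.sin ε ^ 2 / 6 * (s * a + r) ≤ T + (s * x + r) := by
  have hcpos : 0 < Real.cos ε := Real.cos_pos_of_mem_Ioo
    ⟨by linarith [Real.pi_pos], hε2⟩
  have hc1 : Real.cos ε ≤ 1 := Real.cos_le_one ε
  set c := Real.cos ε with hc
  have hx0 : x < 0 := by
    by_contra h; push_neg at h; nlinarith [mul_nonneg hs.le h]
  have hsin2 : Real.sin ε ^ 2 = 1 - c ^ 2 := by
    have := Real.sin_sq_add_cos_sq ε; linarith
  have hac : 0 ≤ a * c := by positivity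
  have hxabs : x ^ 2 ≤ a ^ 2 * c ^ 2 := by
    have h := sq_le_sq' hx (le_trans hx0.le hac)
    rw [mul_pow] at h; exact h
  have hy2 : a ^ 2 * Real.sin ε ^ 2 ≤ y ^ 2 := by
    rw [hsin2]; nlinarith [hxabs]
  have hra : r ≤ s * a := by
    have hsx : s * (-(a * c)) ≤ s * x := mul_le_mul_of_nonneg_left hx hs.le
    nlinarith [mul_pos hs ha]
  have hT3 : T ≤ 2 * s * a := by
    have h1 : (s * x + r) ^ 2 ≤ (s * a) ^ 2 := by
      have hsx : s * (-(a * c)) ≤ s * x := mul_le_mul_of_nonneg_left hx hs.le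
      nlinarith [mul_pos hs ha]
    have h2 : (s * y) ^ 2 ≤ (s * a) ^ 2 := by nlinarith [sq_nonneg s, sq_nonneg x]
    nlinarith [mul_pos hs ha]
  have hTge : -(s * x + r) ≤ T := by
    nlinarith [hT2, hT0, sq_nonneg (s * y)]
  have h3 : 0 ≤ T + (s * x + r) := by linarith
  have key : s ^ 2 * a ^ 2 * Real.sin ε ^ 2 ≤ (T + (s * x + r)) * (3 * s * a) := by
    have h1 : (T + (s * x + r)) * (T - (s * x + r)) = (s * y) ^ 2 :=
      by linear_combination hT2
    have h2 : T - (s * x + r) ≤ 3 * s * a := by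
      have hsx : s * (-(a * c)) ≤ s * x := mul_le_mul_of_nonneg_left hx hs.le
      nlinarith [mul_pos hs ha]
    have k1 : s ^ 2 * (a ^ 2 * Real.sin ε ^ 2) ≤ s ^ 2 * y ^ 2 :=
      mul_le_mul_of_nonneg_left hy2 (sq_nonneg s)
    have k2 : (T + (s * x + r)) * (T - (s * x + r))
        ≤ (T + (s * x + r)) * (3 * s * a) := mul_le_mul_of_nonneg_left h2 h3
    nlinarith [h1, k1, k2]
  nlinarith [key, mul_nonneg (mul_nonneg (sq_nonneg (Real.sin ε)) (mul_pos hs ha).le)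
    (by linarith : (0:ℝ) ≤ s * a - r), mul_pos hs ha]

lemma core (ε : ℝ) (hε1 : 0 < ε) (hε2 : ε < Real.pi / 2) (s a x y r : ℝ)
    (hs : 0 < s) (ha : 0 < a) (hr : 0 ≤ r)
    (hxy : x ^ 2 + y ^ 2 = a ^ 2) (hx : -(a * Real.cos ε) ≤ x) :
    Kc ε * (s * a + r) ≤ Real.sqrt ((s * x + r) ^ 2 + (s * y) ^ 2) + (s * x + r) := by
  set T := Real.sqrt ((s * x + r) ^ 2 + (s * y) ^ 2) with hT
  have hT0 : 0 ≤ T := Real.sqrt_nonneg _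
  have hT2 : T ^ 2 = (s * x + r) ^ 2 + (s * y) ^ 2 := Real.sq_sqrt (by positivity)
  have hsar : 0 ≤ s * a + r := by positivity
  rcases le_or_gt 0 (s * x + r) with hpos | hneg
  · have h1 := core_pos ε hε1 hε2 s a x y r hs ha hr hxy hx hT0 hT2
    have h2 : Kc ε * (s * a + r) ≤ Real.sqrt ((1 - Real.cos ε) / 2) * (s * a + r) :=
      mul_le_mul_of_nonneg_right (min_le_left _ _) hsar
    linarith
  · have h1 := core_neg ε hε1 hε2 s a x y r hs ha hr hxy hx hT0 hT2 hneg
    have h2 : Kc ε * (s * a + r) ≤ Real.sin ε ^ 2 / 6 * (s * a + r) :=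
      mul_le_mul_of_nonneg_right (min_le_right _ _) hsar
    linarith

lemma re_lower (ε μ : ℝ) (hε1 : 0 < ε) (hε2 : ε < Real.pi / 2) (hμ : 0 < μ)
    (l : ℂ) (hl : l ≠ 0) (harg : |l.arg| ≤ Real.pi - ε) (r : ℝ) (hr : 0 ≤ r)
    (A : ℂ) (hA2 : A ^ 2 = (μ : ℂ)⁻¹ * l + (r : ℂ)) (hA : 0 < A.re) :
    Real.sqrt (Kc ε * min μ⁻¹ 1 / 4) * (Real.sqrt (‖l‖) + Real.sqrt r)
      ≤ A.re := by
  set s := μ⁻¹ with hsdef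
  have hs : 0 < s := by positivity
  set a := ‖l‖ with hadef
  have ha : 0 < a := by simpa [hadef] using (norm_pos_iff.mpr hl)
  set x := l.re with hxdef
  set y := l.im with hydef
  have hxy : x ^ 2 + y ^ 2 = a ^ 2 := by
    rw [hadef, Complex.sq_norm, Complex.normSq_apply]; ring
  -- real part of l is bounded below
  have hx : -(a * Real.cos ε) ≤ x := by
    have h1 : Real.cos (Real.pi - ε) ≤ Real.cos |l.arg| :=
      Real.cos_le_cos_of_nonneg_of_le_pi (abs_nonneg _) (by linarith [Real.pi_pos]) harg
    rw [Real.cos_pi_sub, Real.cos_abs] at h1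
    have h2 : Real.cos l.arg = x / a := by rw [hadef, hxdef]; exact Complex.cos_arg hl
    rw [h2] at h1
    have := mul_le_mul_of_nonneg_left h1 ha.le
    rw [mul_div_cancel₀ _ (ne_of_gt ha)] at this
    linarith [this]
  -- identify real part and modulus of A^2
  have hA2' : A ^ 2 = ((s : ℝ) : ℂ) * l + ((r : ℝ) : ℂ) := by
    rw [hA2, hsdef, Complex.ofReal_inv]
  have hzre : (A ^ 2).re = s * x + r := by
    rw [hA2']; simp [Complex.add_re, Complex.re_ofReal_mul, hxdef]
  have hzim : (A ^ 2).im = s * y := by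
    rw [hA2']; simp [Complex.add_im, Complex.im_ofReal_mul, hydef]
  have habs : ‖A ^ 2‖ = Real.sqrt ((s * x + r) ^ 2 + (s * y) ^ 2) := by
    rw [Complex.norm_def, Complex.normSq_apply, hzre, hzim]; ring_nf
  have hre2 : (A ^ 2).re = A.re ^ 2 - A.im ^ 2 := by
    rw [pow_two, Complex.mul_re]; ring
  have habs2 : ‖A ^ 2‖ = A.re ^ 2 + A.im ^ 2 := by
    rw [norm_pow, Complex.sq_norm, Complex.normSq_apply]; ring
  have hmain : Kc ε * (s * a + r) ≤ 2 * A.re ^ 2 := by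
    have h := core ε hε1 hε2 s a x y r hs ha hr hxy hx
    rw [← habs, habs2, ← hzre, hre2] at h
    linarith
  -- combine scalars
  have hK : 0 < Kc ε := Kc_pos hε1 hε2
  have hmin : 0 < min s 1 := lt_min hs one_pos
  have hm : min s 1 * (a + r) ≤ s * a + r := by
    have h1 : min s 1 * a ≤ s * a := mul_le_mul_of_nonneg_right (min_le_left _ _) ha.le
    have h2 : min s 1 * r ≤ 1 * r := mul_le_mul_of_nonneg_right (min_le_right _ _) hr
    nlinarith [h1, h2]
  have hsq2 : (Real.sqrt a + Real.sqrt r) ^ 2 ≤ 2 * (a + r) := by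
    nlinarith [Real.sq_sqrt ha.le, Real.sq_sqrt hr,
      sq_nonneg (Real.sqrt a - Real.sqrt r)]
  set c0 := Real.sqrt (Kc ε * min s 1 / 4) with hc0def
  have hc00 : 0 ≤ c0 := Real.sqrt_nonneg _
  have hc02 : c0 ^ 2 = Kc ε * min s 1 / 4 := Real.sq_sqrt (by positivity)
  have hfin : (c0 * (Real.sqrt a + Real.sqrt r)) ^ 2 ≤ A.re ^ 2 := by
    rw [mul_pow, hc02]
    have h1 : Kc ε * (min s 1 * (a + r)) ≤ Kc ε * (s * a + r) :=
      mul_le_mul_of_nonneg_left hm hK.le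
    have h2 : Kc ε * min s 1 * ((Real.sqrt a + Real.sqrt r) ^ 2)
        ≤ Kc ε * min s 1 * (2 * (a + r)) :=
      mul_le_mul_of_nonneg_left hsq2 (by positivity)
    nlinarith [h1, h2, hmain]
  nlinarith [hfin, mul_nonneg hc00 (by positivity : (0:ℝ) ≤ Real.sqrt a + Real.sqrt r), hA]

lemma abs_upper (μ : ℝ) (hμ : 0 < μ)
    (l : ℂ) (r : ℝ) (hr : 0 ≤ r)
    (A : ℂ) (hA2 : A ^ 2 = (μ : ℂ)⁻¹ * l + (r : ℂ)) :
    ‖A‖ ≤ max (Real.sqrt μ⁻¹) 1 * (Real.sqrt (‖l‖) + Real.sqrt r) := by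
  set s := μ⁻¹ with hsdef
  have hs : 0 < s := by positivity
  set a := ‖l‖ with hadef
  have ha : 0 ≤ a := norm_nonneg l
  have habs : (‖A‖) ^ 2 ≤ s * a + r := by
    rw [← norm_pow, hA2]
    calc ‖((μ : ℂ)⁻¹ * l + (r : ℂ))‖
        ≤ ‖((μ : ℂ)⁻¹ * l)‖ + ‖((r : ℝ) : ℂ)‖ :=
          norm_add_le _ _
      _ = s * a + r := by
          rw [norm_mul, norm_inv, Complex.norm_real, Complex.norm_real, Real.norm_eq_abs, Real.norm_eq_abs,
            abs_of_pos hμ, abs_of_nonneg hr, hsdef, hadef]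
  have h1 : (‖A‖) ^ 2 ≤ (Real.sqrt s * Real.sqrt a + Real.sqrt r) ^ 2 := by
    have := Real.sq_sqrt hs.le
    have := Real.sq_sqrt ha
    have := Real.sq_sqrt hr
    nlinarith [mul_nonneg (mul_nonneg (Real.sqrt_nonneg s) (Real.sqrt_nonneg a))
      (Real.sqrt_nonneg r)]
  have h2 : ‖A‖ ≤ Real.sqrt s * Real.sqrt a + Real.sqrt r := by
    nlinarith [norm_nonneg A,
      mul_nonneg (Real.sqrt_nonneg s) (Real.sqrt_nonneg a), Real.sqrt_nonneg r]
  have h3 : Real.sqrt s * Real.sqrt a + Real.sqrt r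
      ≤ max (Real.sqrt s) 1 * (Real.sqrt a + Real.sqrt r) := by
    have m1 : Real.sqrt s ≤ max (Real.sqrt s) 1 := le_max_left _ _
    have m2 : (1:ℝ) ≤ max (Real.sqrt s) 1 := le_max_right _ _
    nlinarith [Real.sqrt_nonneg a, Real.sqrt_nonneg r]
  linarith


/-- Lopatinski determinant estimate: for `ε ∈ (0,π/2)`, `α > 0`, `α + β > 0` there are
constants `c₁, c₂ > 0` depending only on `ε, α, β` such that for all `λ ∈ Σ_ε` and
`ξ′ ∈ ℝ^{N−1}` (`N ≥ 2`), with `A, B` the principal square roots (positive real part)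
of `(α+β)⁻¹λ + |ξ′|²` and `α⁻¹λ + |ξ′|²` respectively, the Lopatinski determinant
`L = (α+β)A + αB` satisfies `c₁(|λ|^{1/2}+|ξ′|) ≤ Re L ≤ |L| ≤ c₂(|λ|^{1/2}+|ξ′|)`;
in particular `L ≠ 0`. -/
theorem stmt_9 (ε α β : ℝ) (hε : ε ∈ Set.Ioo 0 (Real.pi / 2)) (hα : 0 < α)
    (hαβ : 0 < α + β) :
    ∃ c₁ c₂ : ℝ, 0 < c₁ ∧ 0 < c₂ ∧
      ∀ (N : ℕ), 2 ≤ N →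
        ∀ (l : ℂ), l ≠ 0 → |l.arg| ≤ Real.pi - ε →
          ∀ ξ : EuclideanSpace ℝ (Fin (N - 1)),
            ∀ A B : ℂ,
              A ^ 2 = ((α + β : ℝ) : ℂ)⁻¹ * l + ((‖ξ‖ ^ 2 : ℝ) : ℂ) → 0 < A.re →
              B ^ 2 = (α : ℂ)⁻¹ * l + ((‖ξ‖ ^ 2 : ℝ) : ℂ) → 0 < B.re →
                c₁ * (Real.sqrt (‖l‖) + ‖ξ‖)
                    ≤ (((α + β : ℝ) : ℂ) * A + (α : ℂ) * B).re ∧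
                (((α + β : ℝ) : ℂ) * A + (α : ℂ) * B).re
                    ≤ ‖(((α + β : ℝ) : ℂ) * A + (α : ℂ) * B)‖ ∧
                ‖(((α + β : ℝ) : ℂ) * A + (α : ℂ) * B)‖
                    ≤ c₂ * (Real.sqrt (‖l‖) + ‖ξ‖) ∧
                ((α + β : ℝ) : ℂ) * A + (α : ℂ) * B ≠ 0 := by
  obtain ⟨hε1, hε2⟩ := hε
  have hK : 0 < Kc ε := Kc_pos hε1 hε2
  set cA := Real.sqrt (Kc ε * min (α + β)⁻¹ 1 / 4) with hcAdef
  set cB := Real.sqrt (Kc ε * min α⁻¹ 1 / 4) with hcBdef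
  have hcA : 0 < cA := Real.sqrt_pos.mpr (by
    have : 0 < min (α + β)⁻¹ 1 := lt_min (by positivity) one_pos
    positivity)
  have hcB : 0 < cB := Real.sqrt_pos.mpr (by
    have : 0 < min α⁻¹ 1 := lt_min (by positivity) one_pos
    positivity)
  refine ⟨(α + β) * cA + α * cB,
    (α + β) * max (Real.sqrt (α + β)⁻¹) 1 + α * max (Real.sqrt α⁻¹) 1,
    by positivity,
    by positivity, ?_⟩
  intro N hN l hl harg ξ A B hA2 hA hB2 hB
  set r : ℝ := ‖ξ‖ ^ 2 with hrdef
  have hr : 0 ≤ r := by positivity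
  have hsr : Real.sqrt r = ‖ξ‖ := Real.sqrt_sq (norm_nonneg ξ)
  have hAlow := re_lower ε (α + β) hε1 hε2 hαβ l hl harg r hr A hA2 hA
  have hBlow := re_lower ε α hε1 hε2 hα l hl harg r hr B hB2 hB
  have hAup := abs_upper (α + β) hαβ l r hr A hA2
  have hBup := abs_upper α hα l r hr B hB2
  rw [hsr] at hAlow hBlow hAup hBup
  set L := ((α + β : ℝ) : ℂ) * A + (α : ℂ) * B with hLdef
  have hLre : L.re = (α + β) * A.re + α * B.re := by
    rw [hLdef, Complex.add_re, Complex.re_ofReal_mul, Complex.re_ofReal_mul]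
  set S := Real.sqrt (‖l‖) + ‖ξ‖ with hSdef
  have hS0 : 0 ≤ S := by positivity
  have hSpos : 0 < S := by
    have : 0 < Real.sqrt (‖l‖) :=
      Real.sqrt_pos.mpr (norm_pos_iff.mpr hl)
    have := norm_nonneg ξ
    rw [hSdef]; linarith
  have hlow : ((α + β) * cA + α * cB) * S ≤ L.re := by
    rw [hLre]
    have h1 : (α + β) * (cA * S) ≤ (α + β) * A.re :=
      mul_le_mul_of_nonneg_left hAlow hαβ.le
    have h2 : α * (cB * S) ≤ α * B.re :=
      mul_le_mul_of_nonneg_left hBlow hα.le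
    nlinarith [h1, h2]
  have hreabs : L.re ≤ ‖L‖ := Complex.re_le_norm L
  have hup : ‖L‖
      ≤ ((α + β) * max (Real.sqrt (α + β)⁻¹) 1 + α * max (Real.sqrt α⁻¹) 1) * S := by
    calc ‖L‖
        ≤ ‖(((α + β : ℝ) : ℂ) * A)‖ + ‖((α : ℂ) * B)‖ :=
          norm_add_le _ _
      _ = (α + β) * ‖A‖ + α * ‖B‖ := by
          rw [norm_mul, norm_mul, Complex.norm_real, Complex.norm_real, Real.norm_eq_abs, Real.norm_eq_abs,
            abs_of_pos hαβ, abs_of_pos hα]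
      _ ≤ (α + β) * (max (Real.sqrt (α + β)⁻¹) 1 * S)
            + α * (max (Real.sqrt α⁻¹) 1 * S) := by
          have h1 := mul_le_mul_of_nonneg_left hAup hαβ.le
          have h2 := mul_le_mul_of_nonneg_left hBup hα.le
          linarith
      _ = _ := by ring
  have hLrepos : 0 < L.re :=
    lt_of_lt_of_le (by positivity) hlow
  refine ⟨hlow, hreabs, hup, ?_⟩
  intro h
  rw [h] at hLrepos
  simp at hLrepos
end

section
/- Let N ≥ 1, α > 0, β ∈ ℝ with α + β > 0, ε ∈ (0, π/2) and λ ∈ Σ_ε. If u ∈ 𝒮(ℝ^N; ℂ^N) satisfies the homogeneous whole-space Lamé equations λ u − α Δu − β ∇(div u) = 0 on ℝ^N, then u = 0. -/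
open MeasureTheory

noncomputable section

variable {N : ℕ}

/-- Divergence `div u = Σ_k ∂_k u_k`. -/
def divergence (u : (Fin N → ℝ) → (Fin N → ℂ)) (x : Fin N → ℝ) : ℂ :=
  ∑ k, fderiv ℝ (fun y => u y k) x (Pi.single k 1)

/-- Laplacian `Δw = Σ_k ∂_k² w` of a scalar function. -/
def lap (w : (Fin N → ℝ) → ℂ) (x : Fin N → ℝ) : ℂ :=
  ∑ k, fderiv ℝ (fun y => fderiv ℝ w y (Pi.single k 1)) x (Pi.single k 1)

open SchwartzMap
namespace LameAux

variable {N : ℕ}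

abbrev Sch (N : ℕ) := SchwartzMap (Fin N → ℝ) (Fin N → ℂ)

def P (m : Fin N) (f : Sch N) : Sch N := LineDeriv.lineDerivOpCLM ℝ (Sch N) (F := Sch N) (Pi.single m 1 : Fin N → ℝ) f

lemma P_apply (m : Fin N) (f : Sch N) (x : Fin N → ℝ) :
    P m f x = fderiv ℝ (⇑f) x (Pi.single m 1) := rfl

lemma comp_fderiv_apply (f : Sch N) (x m : Fin N → ℝ) (j : Fin N) :
    fderiv ℝ (fun y => f y j) x m = fderiv ℝ (⇑f) x m j := by
  have h2 := (hasFDerivAt_pi'.1 (f.differentiable x).hasFDerivAt) j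
  rw [h2.fderiv]; rfl

lemma comp_fderiv_P (f : Sch N) (x : Fin N → ℝ) (m j : Fin N) :
    fderiv ℝ (fun y => f y j) x (Pi.single m 1) = P m f x j := by
  rw [comp_fderiv_apply, P_apply]

lemma comp_differentiable (f : Sch N) (j : Fin N) :
    Differentiable ℝ (fun y => f y j) := fun x =>
  ((hasFDerivAt_pi'.1 (f.differentiable x).hasFDerivAt) j).differentiableAt

lemma integrable_mul_conj (f g : Sch N) (i j : Fin N) :
    Integrable (fun x => f x i * (starRingEnd ℂ) (g x j)) volume := by
  have hgi : Integrable (fun x => (starRingEnd ℂ) (g x j)) volume := by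
    refine (g.integrable (μ := volume)).norm.mono' ?_ (Filter.Eventually.of_forall fun x => ?_)
    · exact (Complex.continuous_conj.comp ((continuous_apply j).comp g.continuous)).aestronglyMeasurable
    · simpa using norm_le_pi_norm (g x) j
  refine hgi.bdd_mul (c := ‖f.toBoundedContinuousFunction‖) ?_ ?_
  · exact ((continuous_apply i).comp f.continuous).aestronglyMeasurable
  · refine Filter.Eventually.of_forall fun x => ?_
    exact (norm_le_pi_norm (f x) i).trans (f.toBoundedContinuousFunction.norm_coe_le_norm x)

/-- the key integration by parts lemma -/
lemma ibp (f g : Sch N) (m i j : Fin N) :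
    ∫ x, P m f x i * (starRingEnd ℂ) (g x j)
      = - ∫ x, f x i * (starRingEnd ℂ) (P m g x j) := by
  have hdf : Differentiable ℝ (fun x => f x i) := comp_differentiable f i
  have hdgj : Differentiable ℝ (fun x => g x j) := comp_differentiable g j
  have hdg : Differentiable ℝ (fun x => (starRingEnd ℂ) (g x j)) :=
    Complex.conjCLE.differentiable.comp hdgj
  have hfd : ∀ x, fderiv ℝ (fun y => (starRingEnd ℂ) (g y j)) x (Pi.single m 1)
      = (starRingEnd ℂ) (P m g x j) := by
    intro x
    have : (fun y => (starRingEnd ℂ) (g y j)) = ⇑(Complex.conjCLE) ∘ (fun y => g y j) := rfl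
    rw [this, ContinuousLinearEquiv.comp_fderiv]
    simp [comp_fderiv_P]
  have hffd : ∀ x, fderiv ℝ (fun y => f y i) x (Pi.single m 1) = P m f x i := fun x =>
    comp_fderiv_P f x m i
  have key := integral_mul_fderiv_eq_neg_fderiv_mul_of_integrable (μ := volume)
    (f := fun x => f x i) (g := fun x => (starRingEnd ℂ) (g x j)) (v := Pi.single m 1)
    ?_ ?_ ?_ (fun x _ => hdf x) (fun x _ => hdg x)
  · have e1 : (fun x => f x i * fderiv ℝ (fun y => (starRingEnd ℂ) (g y j)) x (Pi.single m 1))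
        = fun x => f x i * (starRingEnd ℂ) (P m g x j) := funext fun x => by rw [hfd]
    have e2 : (fun x => fderiv ℝ (fun y => f y i) x (Pi.single m 1) * (starRingEnd ℂ) (g x j))
        = fun x => P m f x i * (starRingEnd ℂ) (g x j) := funext fun x => by rw [hffd]
    calc ∫ x, P m f x i * (starRingEnd ℂ) (g x j)
        = ∫ x, fderiv ℝ (fun y => f y i) x (Pi.single m 1) * (starRingEnd ℂ) (g x j) := by rw [e2]
      _ = - ∫ x, f x i * fderiv ℝ (fun y => (starRingEnd ℂ) (g y j)) x (Pi.single m 1) := by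
            rw [key]; simp
      _ = - ∫ x, f x i * (starRingEnd ℂ) (P m g x j) := by rw [e1]
  · refine ((integrable_mul_conj (P m f) g i j).congr ?_)
    exact Filter.Eventually.of_forall fun x => by dsimp only; rw [hffd]
  · refine ((integrable_mul_conj f (P m g) i j).congr ?_)
    exact Filter.Eventually.of_forall fun x => by dsimp only; rw [hfd]
  · exact integrable_mul_conj f g i j

end LameAux

namespace LameAux

variable {N : ℕ}

lemma P_comm (f : Sch N) (a b : Fin N) (x : Fin N → ℝ) :
    P a (P b f) x = P b (P a f) x := by
  have hD : Differentiable ℝ (fderiv ℝ (⇑f)) :=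
    (f.smooth'.fderiv_right (m := (⊤:ℕ∞)) le_rfl).differentiable (by simp)
  have key : ∀ (v w : Fin N → ℝ), fderiv ℝ (fun y => fderiv ℝ (⇑f) y w) x v
      = fderiv ℝ (fderiv ℝ (⇑f)) x v w := by
    intro v w
    have h1 := ((ContinuousLinearMap.apply ℝ (Fin N → ℂ) w).hasFDerivAt
      (x := fderiv ℝ (⇑f) x)).comp x (hD x).hasFDerivAt
    have h2 : HasFDerivAt (fun y => fderiv ℝ (⇑f) y w)
        ((ContinuousLinearMap.apply ℝ (Fin N → ℂ) w).comp (fderiv ℝ (fderiv ℝ (⇑f)) x)) x := h1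
    rw [h2.fderiv]; rfl
  have hsymm : IsSymmSndFDerivAt ℝ (⇑f) x :=
    ((f.smooth 2).contDiffAt).isSymmSndFDerivAt (by norm_num)
  have hcoe : ∀ (c : Fin N), ⇑(P c f) = fun y => fderiv ℝ (⇑f) y (Pi.single c 1) :=
    fun c => funext fun y => P_apply c f y
  rw [P_apply, hcoe, key, P_apply, hcoe, key]
  exact hsymm _ _

lemma integrable_normSq (f : Sch N) (i : Fin N) :
    Integrable (fun x => Complex.normSq (f x i)) volume := by
  refine (integrable_mul_conj f f i i).norm.congr (Filter.Eventually.of_forall fun x => ?_)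
  dsimp only
  rw [Complex.mul_conj]
  simp [Complex.normSq_nonneg, abs_of_nonneg]

end LameAux

namespace LameAux

lemma lap_eq (u : Sch N) (x : Fin N → ℝ) (j : Fin N) :
    lap (fun y => u y j) x = ∑ k, P k (P k u) x j := by
  unfold lap
  refine Finset.sum_congr rfl fun k _ => ?_
  have e1 : (fun y => fderiv ℝ (fun z => u z j) y (Pi.single k 1))
      = fun y => P k u y j := funext fun y => comp_fderiv_P u y k j
  rw [e1, comp_fderiv_P]

lemma div_eq (u : Sch N) (x : Fin N → ℝ) :
    divergence (fun z => u z) x = ∑ k, P k u x k := by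
  unfold divergence
  exact Finset.sum_congr rfl fun k _ => comp_fderiv_P u x k k

lemma fderiv_div_eq (u : Sch N) (x : Fin N → ℝ) (j : Fin N) :
    fderiv ℝ (fun y => divergence (fun z => u z) y) x (Pi.single j 1)
      = ∑ k, P j (P k u) x k := by
  have e1 : (fun y => divergence (fun z => u z) y) = fun y => ∑ k, P k u y k :=
    funext fun y => div_eq u y
  rw [e1]
  have hh : HasFDerivAt (fun y => ∑ k, P k u y k)
      (∑ k, (ContinuousLinearMap.proj k).comp (fderiv ℝ (⇑(P k u)) x)) x := by
    apply HasFDerivAt.fun_sum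
    intro k _
    exact (hasFDerivAt_pi'.1 ((P k u).differentiable x).hasFDerivAt) k
  rw [hh.fderiv, ContinuousLinearMap.sum_apply]
  exact Finset.sum_congr rfl fun k _ => by rw [P_apply]; rfl

/-- the basic complex pairing integral -/
def pI (f g : Sch N) (i j : Fin N) : ℂ := ∫ x, f x i * (starRingEnd ℂ) (g x j)

lemma ibp' (f g : Sch N) (m i j : Fin N) : pI (P m f) g i j = - pI f (P m g) i j := ibp f g m i j

lemma pI_self (f : Sch N) (i : Fin N) :
    pI f f i i = ((∫ x, Complex.normSq (f x i) : ℝ) : ℂ) := by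
  unfold pI
  simp_rw [Complex.mul_conj]
  exact integral_ofReal

lemma pI_congr_right (f g g' : Sch N) (i j : Fin N) (h : ∀ x, g x j = g' x j) :
    pI f g i j = pI f g' i j := by
  unfold pI
  exact integral_congr_ae (Filter.Eventually.of_forall fun x => by dsimp only; rw [h x])

lemma pI_norm_le (f g : Sch N) (i j : Fin N) :
    ‖pI f g i j‖ ≤ (∫ x, Complex.normSq (f x i)) / 2 + (∫ x, Complex.normSq (g x j)) / 2 := by
  have h1 : ‖pI f g i j‖ ≤ ∫ x, ‖f x i * (starRingEnd ℂ) (g x j)‖ :=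
    norm_integral_le_integral_norm _
  refine h1.trans ?_
  have h2 : ∫ x, ‖f x i * (starRingEnd ℂ) (g x j)‖
      ≤ ∫ x, (Complex.normSq (f x i) / 2 + Complex.normSq (g x j) / 2) := by
    refine integral_mono (integrable_mul_conj f g i j).norm
      (((integrable_normSq f i).div_const 2).add ((integrable_normSq g j).div_const 2)) ?_
    intro x
    dsimp only
    have ha : ‖f x i * (starRingEnd ℂ) (g x j)‖ = ‖f x i‖ * ‖g x j‖ := by
      rw [norm_mul]; simp
    rw [ha]
    have h3 : Complex.normSq (f x i) = ‖f x i‖ ^ 2 := by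
      rw [Complex.normSq_eq_norm_sq]
    have h4 : Complex.normSq (g x j) = ‖g x j‖ ^ 2 := by
      rw [Complex.normSq_eq_norm_sq]
    rw [h3, h4]
    nlinarith [sq_nonneg (‖f x i‖ - ‖g x j‖), norm_nonneg (f x i), norm_nonneg (g x j)]
  refine h2.trans ?_
  rw [integral_add ((integrable_normSq f i).div_const 2) ((integrable_normSq g j).div_const 2),
    integral_div, integral_div]

end LameAux

namespace LameAux

variable {N : ℕ}

lemma step1 (u : Sch N) (l : ℂ) (α β : ℝ)
    (heq : ∀ (x : Fin N → ℝ) (j : Fin N),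
      l * u x j - (α : ℂ) * lap (fun y => u y j) x -
        (β : ℂ) * fderiv ℝ (fun y => divergence (fun z => u z) y) x (Pi.single j 1) = 0)
    (j : Fin N) :
    l * pI u u j j = (α:ℂ) * (∑ k, pI (P k (P k u)) u j j)
      + (β:ℂ) * (∑ k, pI (P j (P k u)) u k j) := by
  have hpt : ∀ x, l * (u x j * (starRingEnd ℂ) (u x j))
      = (α:ℂ) * (∑ k, P k (P k u) x j * (starRingEnd ℂ) (u x j))
        + (β:ℂ) * (∑ k, P j (P k u) x k * (starRingEnd ℂ) (u x j)) := by
    intro x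
    have h := heq x j
    rw [lap_eq, fderiv_div_eq] at h
    have e1 : ∑ k, P k (P k u) x j * (starRingEnd ℂ) (u x j)
        = (∑ k, P k (P k u) x j) * (starRingEnd ℂ) (u x j) := (Finset.sum_mul _ _ _).symm
    have e2 : ∑ k, P j (P k u) x k * (starRingEnd ℂ) (u x j)
        = (∑ k, P j (P k u) x k) * (starRingEnd ℂ) (u x j) := (Finset.sum_mul _ _ _).symm
    rw [e1, e2]
    linear_combination ((starRingEnd ℂ) (u x j)) * h
  have hi1 : Integrable (fun x => (α:ℂ) * (∑ k, P k (P k u) x j * (starRingEnd ℂ) (u x j)))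
      volume :=
    (integrable_finset_sum _ fun k _ => integrable_mul_conj (P k (P k u)) u j j).const_mul _
  have hi2 : Integrable (fun x => (β:ℂ) * (∑ k, P j (P k u) x k * (starRingEnd ℂ) (u x j)))
      volume :=
    (integrable_finset_sum _ fun k _ => integrable_mul_conj (P j (P k u)) u k j).const_mul _
  calc l * pI u u j j = ∫ x, l * (u x j * (starRingEnd ℂ) (u x j)) := by
        unfold pI; rw [integral_const_mul]
    _ = ∫ x, ((α:ℂ) * (∑ k, P k (P k u) x j * (starRingEnd ℂ) (u x j))
        + (β:ℂ) * (∑ k, P j (P k u) x k * (starRingEnd ℂ) (u x j))) :=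
          integral_congr_ae (Filter.Eventually.of_forall fun x => hpt x)
    _ = (α:ℂ) * (∑ k, pI (P k (P k u)) u j j) + (β:ℂ) * (∑ k, pI (P j (P k u)) u k j) := by
        rw [integral_add hi1 hi2, integral_const_mul, integral_const_mul,
          integral_finset_sum _ (fun k _ => integrable_mul_conj (P k (P k u)) u j j),
          integral_finset_sum _ (fun k _ => integrable_mul_conj (P j (P k u)) u k j)]
        rfl

end LameAux

namespace LameAux

variable {N : ℕ}

def Q (f : Sch N) (i : Fin N) : ℝ := ∫ x, Complex.normSq (f x i)

lemma Q_nonneg (f : Sch N) (i : Fin N) : 0 ≤ Q f i :=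
  integral_nonneg fun x => Complex.normSq_nonneg _

lemma main2 (u : Sch N) (l : ℂ) (α β : ℝ)
    (heq : ∀ (x : Fin N → ℝ) (j : Fin N),
      l * u x j - (α : ℂ) * lap (fun y => u y j) x -
        (β : ℂ) * fderiv ℝ (fun y => divergence (fun z => u z) y) x (Pi.single j 1) = 0) :
    l * ((∑ j, Q u j : ℝ) : ℂ) + (α:ℂ) * ((∑ j, ∑ k, Q (P k u) j : ℝ) : ℂ)
      + (β:ℂ) * (∑ j, ∑ k, pI (P k u) (P j u) k j) = 0 := by
  have h : ∀ j, l * ((Q u j : ℝ):ℂ) + (α:ℂ) * ((∑ k, Q (P k u) j : ℝ):ℂ)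
      + (β:ℂ) * (∑ k, pI (P k u) (P j u) k j) = 0 := by
    intro j
    have h1 := step1 u l α β heq j
    rw [pI_self] at h1
    have e1 : ∀ k : Fin N, pI (P k (P k u)) u j j = -((Q (P k u) j : ℝ):ℂ) := fun k => by
      rw [ibp', pI_self]; rfl
    have e2 : ∀ k : Fin N, pI (P j (P k u)) u k j = - pI (P k u) (P j u) k j :=
      fun k => ibp' (P k u) u j k j
    rw [Finset.sum_congr rfl (fun k _ => e1 k), Finset.sum_congr rfl (fun k _ => e2 k)] at h1
    rw [Finset.sum_neg_distrib, Finset.sum_neg_distrib] at h1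
    push_cast
    push_cast at h1
    unfold Q at h1 ⊢
    linear_combination h1
  have hsum : ∑ j, (l * ((Q u j : ℝ):ℂ) + (α:ℂ) * ((∑ k, Q (P k u) j : ℝ):ℂ)
      + (β:ℂ) * (∑ k, pI (P k u) (P j u) k j)) = 0 :=
    Finset.sum_eq_zero fun j _ => h j
  rw [Finset.sum_add_distrib, Finset.sum_add_distrib, ← Finset.mul_sum, ← Finset.mul_sum,
    ← Finset.mul_sum] at hsum
  push_cast
  push_cast at hsum
  linear_combination hsum

lemma S_eq (u : Sch N) :
    ∑ j, ∑ k, pI (P k u) (P j u) k j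
      = ((∫ x, Complex.normSq (∑ k, P k u x k) : ℝ) : ℂ) := by
  have h1 : ∀ j, ∑ k, pI (P k u) (P j u) k j
      = ∫ x, (∑ k, P k u x k) * (starRingEnd ℂ) (P j u x j) := by
    intro j
    unfold pI
    rw [← integral_finset_sum _ (fun k _ => integrable_mul_conj (P k u) (P j u) k j)]
    exact integral_congr_ae (.of_forall fun x => by dsimp only; rw [Finset.sum_mul])
  have hintg : ∀ j, Integrable (fun x => (∑ k, P k u x k) * (starRingEnd ℂ) (P j u x j))
      volume := by
    intro j
    have := integrable_finset_sum (μ := volume) Finset.univ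
      (fun k (_ : k ∈ Finset.univ) => integrable_mul_conj (P k u) (P j u) k j)
    exact this.congr (.of_forall fun x => by dsimp only; rw [Finset.sum_mul])
  calc ∑ j, ∑ k, pI (P k u) (P j u) k j
      = ∑ j, ∫ x, (∑ k, P k u x k) * (starRingEnd ℂ) (P j u x j) :=
        Finset.sum_congr rfl fun j _ => h1 j
    _ = ∫ x, ∑ j, (∑ k, P k u x k) * (starRingEnd ℂ) (P j u x j) :=
        (integral_finset_sum _ (fun j _ => hintg j)).symm
    _ = ∫ x, ((Complex.normSq (∑ k, P k u x k) : ℝ) : ℂ) :=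
        integral_congr_ae (.of_forall fun x => by
          dsimp only
          rw [← Finset.mul_sum, ← map_sum, Complex.mul_conj])
    _ = _ := integral_ofReal

lemma S_bound (u : Sch N) :
    ‖∑ j, ∑ k, pI (P k u) (P j u) k j‖ ≤ ∑ j, ∑ k, Q (P k u) j := by
  have ht : ∀ j k, pI (P k u) (P j u) k j = pI (P j u) (P k u) k j := by
    intro j k
    have a1 : pI (P k u) (P j u) k j = - pI u (P k (P j u)) k j := ibp' u (P j u) k k j
    have a2 : pI u (P k (P j u)) k j = pI u (P j (P k u)) k j :=
      pI_congr_right _ _ _ _ _ (fun x => congrFun (P_comm u k j x) j)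
    have a3 : pI (P j u) (P k u) k j = - pI u (P j (P k u)) k j := ibp' u (P k u) j k j
    rw [a1, a2]
    exact a3.symm
  have hb : ∀ j k, ‖pI (P k u) (P j u) k j‖ ≤ Q (P j u) k / 2 + Q (P k u) j / 2 := by
    intro j k
    rw [ht j k]
    exact pI_norm_le (P j u) (P k u) k j
  have e : ∑ j : Fin N, ∑ k : Fin N, Q (P j u) k = ∑ j : Fin N, ∑ k : Fin N, Q (P k u) j :=
    Finset.sum_comm
  calc ‖∑ j, ∑ k, pI (P k u) (P j u) k j‖
      ≤ ∑ j, ∑ k, ‖pI (P k u) (P j u) k j‖ :=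
        (norm_sum_le _ _).trans (Finset.sum_le_sum fun j _ => norm_sum_le _ _)
    _ ≤ ∑ j, ∑ k, (Q (P j u) k / 2 + Q (P k u) j / 2) :=
        Finset.sum_le_sum fun j _ => Finset.sum_le_sum fun k _ => hb j k
    _ = ∑ j, ∑ k, Q (P k u) j := by
        simp only [Finset.sum_add_distrib, ← Finset.sum_div]
        rw [e]
        ring

end LameAux


open LameAux

/-- Uniqueness for the whole-space Lamé resolvent equations: if `u` is a Schwartz
function with `λu − αΔu − β∇(div u) = 0` on `ℝ^N` for some `λ ∈ Σ_ε`, then `u = 0`. -/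
theorem stmt_14 (N : ℕ) (hN : 1 ≤ N) (α β : ℝ) (hα : 0 < α) (hαβ : 0 < α + β)
    (ε : ℝ) (hε : ε ∈ Set.Ioo 0 (Real.pi / 2)) (l : ℂ) (hl0 : l ≠ 0)
    (harg : |l.arg| ≤ Real.pi - ε)
    (u : SchwartzMap (Fin N → ℝ) (Fin N → ℂ))
    (heq : ∀ (x : Fin N → ℝ) (j : Fin N),
      l * u x j - (α : ℂ) * lap (fun y => u y j) x -
        (β : ℂ) * fderiv ℝ (fun y => divergence (fun z => u z) y) x (Pi.single j 1) = 0) :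
    u = 0 := by
  classical
  have hmain := main2 u l α β heq
  have hS := S_eq u
  have hSb := S_bound u
  set PP := ∑ j, Q u j with hPPdef
  set GG := ∑ j, ∑ k, Q (P k u) j with hGGdef
  set dd := ∫ x, Complex.normSq (∑ k, P k u x k) with hdddef
  rw [hS] at hmain hSb
  have hdd0 : 0 ≤ dd := integral_nonneg fun x => Complex.normSq_nonneg _
  have hGGnn : 0 ≤ GG :=
    Finset.sum_nonneg fun j _ => Finset.sum_nonneg fun k _ => Q_nonneg _ _
  have hPPnn : 0 ≤ PP := Finset.sum_nonneg fun j _ => Q_nonneg u j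
  have hddG : dd ≤ GG := by
    rw [Complex.norm_real, Real.norm_eq_abs, abs_of_nonneg hdd0] at hSb
    exact hSb
  have hPP0 : PP = 0 := by
    by_contra hne
    have hPPpos : 0 < PP := lt_of_le_of_ne hPPnn (Ne.symm hne)
    have him : l.im * PP = 0 := by
      have h2 := congrArg Complex.im hmain
      simpa using h2
    have him0 : l.im = 0 := by
      rcases mul_eq_zero.1 him with h | h
      · exact h
      · exact absurd h hne
    have hre : l.re * PP + (α * GG + β * dd) = 0 := by
      have h2 := congrArg Complex.re hmain
      simp only [Complex.add_re, Complex.mul_re, Complex.ofReal_re, Complex.ofReal_im,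
        Complex.zero_re, mul_zero, sub_zero] at h2
      linarith
    have hlre : 0 < l.re := by
      rcases lt_trichotomy l.re 0 with hlt | heq0 | hgt
      · exfalso
        have harg' : l.arg = Real.pi := Complex.arg_eq_pi_iff.2 ⟨hlt, him0⟩
        rw [harg', abs_of_pos Real.pi_pos] at harg
        linarith [hε.1]
      · exact absurd (Complex.ext (by simpa using heq0) (by simpa using him0)) hl0
      · exact hgt
    have hR : 0 ≤ α * GG + β * dd := by
      rcases le_or_gt 0 β with hb | hb
      · exact add_nonneg (mul_nonneg hα.le hGGnn) (mul_nonneg hb hdd0)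
      · nlinarith [mul_le_mul_of_nonpos_left hddG hb.le]
    nlinarith [mul_pos hlre hPPpos]
  have hQ0 : ∀ j, Q u j = 0 := fun j =>
    (Finset.sum_eq_zero_iff_of_nonneg (fun j _ => Q_nonneg u j)).1 hPP0 j (Finset.mem_univ j)
  have hz : ∀ (x : Fin N → ℝ) (j : Fin N), u x j = 0 := by
    intro x j
    have hae : (fun x => Complex.normSq (u x j)) =ᵐ[volume] 0 :=
      (integral_eq_zero_iff_of_nonneg (fun x => Complex.normSq_nonneg _)
        (integrable_normSq u j)).1 (hQ0 j)
    have hcont : Continuous fun x => Complex.normSq (u x j) :=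
      Complex.continuous_normSq.comp ((continuous_apply j).comp u.continuous)
    have heq0 := (Continuous.ae_eq_iff_eq volume hcont continuous_const).1 hae
    have h3 := congrFun heq0 x
    exact Complex.normSq_eq_zero.1 h3
  ext x j
  exact hz x j
end
end

section
/- Let N ≥ 1, α > 0, β ∈ ℝ with α + β > 0, ε ∈ (0, π/2), λ ∈ Σ_ε and ξ ∈ ℝ^N. Then λ + α|ξ|² ≠ 0 and λ + (α+β)|ξ|² ≠ 0, the N×N complex matrix (λ + α|ξ|²) I_N + β ξ ξᵀ (the Fourier symbol of the Lamé operator λ − αΔ − β∇div) is invertible, and its inverse equals (λ + α|ξ|²)^{−1} ( I_N − β ξ ξᵀ / (λ + (α+β)|ξ|²) ). -/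
lemma aux_ne_zero (l : ℂ) (hl0 : l ≠ 0) (ε : ℝ) (hε : 0 < ε)
    (harg : |l.arg| ≤ Real.pi - ε) (c : ℝ) (hc : 0 ≤ c) : l + (c : ℂ) ≠ 0 := by
  intro h
  have hl : l = ((-c : ℝ) : ℂ) := by
    push_cast
    linear_combination h
  rcases lt_or_eq_of_le hc with hc' | hc'
  · have : l.arg = Real.pi := by
      rw [hl, Complex.arg_ofReal_of_neg (by linarith)]
    rw [this, abs_of_pos Real.pi_pos] at harg
    linarith
  · apply hl0
    rw [hl, ← hc']
    simp

lemma aux_prod {n : ℕ} (M : Matrix (Fin n) (Fin n) ℂ) (s a b c d : ℂ)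
    (hMM : M * M = s • M) :
    (a • (1 : Matrix (Fin n) (Fin n) ℂ) + b • M) * (c • (1 : Matrix (Fin n) (Fin n) ℂ) + d • M) =
      (a * c) • (1 : Matrix (Fin n) (Fin n) ℂ) + (a * d + b * c + b * d * s) • M := by
  simp only [add_mul, mul_add, Matrix.smul_mul, Matrix.mul_smul, Matrix.one_mul,
    Matrix.mul_one, hMM, smul_smul]
  module

/-- For `λ ∈ Σ_ε`, `ξ ∈ ℝ^N`, `α > 0`, `α + β > 0`: the denominators `λ + α|ξ|²` and
`λ + (α+β)|ξ|²` are nonzero, the Fourier symbol `(λ + α|ξ|²) I + β ξξᵀ` of the Lamé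
operator is invertible, and its inverse is
`(λ + α|ξ|²)⁻¹ (I − β ξξᵀ/(λ + (α+β)|ξ|²))`. -/
theorem stmt_15 (N : ℕ) (hN : 1 ≤ N) (α β : ℝ) (hα : 0 < α) (hαβ : 0 < α + β)
    (ε : ℝ) (hε : ε ∈ Set.Ioo 0 (Real.pi / 2)) (l : ℂ) (hl0 : l ≠ 0)
    (harg : |l.arg| ≤ Real.pi - ε) (ξ : EuclideanSpace ℝ (Fin N)) :
    l + ((α * ‖ξ‖ ^ 2 : ℝ) : ℂ) ≠ 0 ∧
    l + (((α + β) * ‖ξ‖ ^ 2 : ℝ) : ℂ) ≠ 0 ∧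
    IsUnit ((l + ((α * ‖ξ‖ ^ 2 : ℝ) : ℂ)) • (1 : Matrix (Fin N) (Fin N) ℂ) +
        (β : ℂ) • Matrix.of (fun j k : Fin N => ((ξ j : ℝ) : ℂ) * ((ξ k : ℝ) : ℂ))) ∧
    ((l + ((α * ‖ξ‖ ^ 2 : ℝ) : ℂ)) • (1 : Matrix (Fin N) (Fin N) ℂ) +
          (β : ℂ) • Matrix.of (fun j k : Fin N => ((ξ j : ℝ) : ℂ) * ((ξ k : ℝ) : ℂ)))⁻¹ =
      (l + ((α * ‖ξ‖ ^ 2 : ℝ) : ℂ))⁻¹ •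
        ((1 : Matrix (Fin N) (Fin N) ℂ) -
          ((β : ℂ) / (l + (((α + β) * ‖ξ‖ ^ 2 : ℝ) : ℂ))) •
            Matrix.of (fun j k : Fin N => ((ξ j : ℝ) : ℂ) * ((ξ k : ℝ) : ℂ))) := by
  obtain ⟨hε0, _⟩ := hε
  have hn2 : (0:ℝ) ≤ ‖ξ‖ ^ 2 := sq_nonneg _
  have hA : l + ((α * ‖ξ‖ ^ 2 : ℝ) : ℂ) ≠ 0 :=
    aux_ne_zero l hl0 ε hε0 harg _ (mul_nonneg hα.le hn2)
  have hB : l + (((α + β) * ‖ξ‖ ^ 2 : ℝ) : ℂ) ≠ 0 :=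
    aux_ne_zero l hl0 ε hε0 harg _ (mul_nonneg hαβ.le hn2)
  set M : Matrix (Fin N) (Fin N) ℂ :=
    Matrix.of (fun j k : Fin N => ((ξ j : ℝ) : ℂ) * ((ξ k : ℝ) : ℂ)) with hM
  set A : ℂ := l + ((α * ‖ξ‖ ^ 2 : ℝ) : ℂ) with hAdef
  set B : ℂ := l + (((α + β) * ‖ξ‖ ^ 2 : ℝ) : ℂ) with hBdef
  have hsum : ∑ i : Fin N, ((ξ i : ℝ) : ℂ) * ((ξ i : ℝ) : ℂ) = ((‖ξ‖ ^ 2 : ℝ) : ℂ) := by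
    have : ‖ξ‖ ^ 2 = ∑ i : Fin N, ξ i * ξ i := by
      rw [← real_inner_self_eq_norm_sq]
      rw [PiLp.inner_apply]
      simp [RCLike.inner_apply, mul_comm, sq]
    rw [this]
    push_cast
    rfl
  have hMM : M * M = ((‖ξ‖ ^ 2 : ℝ) : ℂ) • M := by
    ext j k
    simp only [Matrix.mul_apply, Matrix.smul_apply, hM, Matrix.of_apply, smul_eq_mul]
    calc ∑ i, (ξ j : ℂ) * (ξ i : ℂ) * ((ξ i : ℂ) * (ξ k : ℂ))
        = (∑ i, ((ξ i : ℝ) : ℂ) * ((ξ i : ℝ) : ℂ)) * ((ξ j : ℂ) * (ξ k : ℂ)) := by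
          rw [Finset.sum_mul]; congr 1; ext i; ring
      _ = ((‖ξ‖ ^ 2 : ℝ) : ℂ) * ((ξ j : ℂ) * (ξ k : ℂ)) := by rw [hsum]
  have hBA : B - A = (β : ℂ) * ((‖ξ‖ ^ 2 : ℝ) : ℂ) := by
    rw [hBdef, hAdef]; push_cast; ring
  have hcand : (A⁻¹ : ℂ) • ((1 : Matrix (Fin N) (Fin N) ℂ) - ((β : ℂ) / B) • M) =
      A⁻¹ • (1 : Matrix (Fin N) (Fin N) ℂ) + (-(A⁻¹ * ((β : ℂ) / B))) • M := by
    rw [smul_sub, smul_smul]; module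
  have hcoef : A * (-(A⁻¹ * ((β : ℂ) / B))) + (β : ℂ) * A⁻¹
      + (β : ℂ) * (-(A⁻¹ * ((β : ℂ) / B))) * ((‖ξ‖ ^ 2 : ℝ) : ℂ) = 0 := by
    have hA1 : A * A⁻¹ = 1 := mul_inv_cancel₀ hA
    have hB1 : B * B⁻¹ = 1 := mul_inv_cancel₀ hB
    rw [div_eq_mul_inv]
    linear_combination (β : ℂ) * A⁻¹ * B⁻¹ * hBA - (β : ℂ) * A⁻¹ * hB1
  have key : (A • (1 : Matrix (Fin N) (Fin N) ℂ) + (β : ℂ) • M) *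
      (A⁻¹ • ((1 : Matrix (Fin N) (Fin N) ℂ) - ((β : ℂ) / B) • M)) = 1 := by
    rw [hcand, aux_prod M _ _ _ _ _ hMM, mul_inv_cancel₀ hA, hcoef, one_smul, zero_smul, add_zero]
  have key' : (A⁻¹ • ((1 : Matrix (Fin N) (Fin N) ℂ) - ((β : ℂ) / B) • M)) *
      (A • (1 : Matrix (Fin N) (Fin N) ℂ) + (β : ℂ) • M) = 1 := by
    rw [hcand, aux_prod M _ _ _ _ _ hMM, inv_mul_cancel₀ hA, one_smul]
    have : A⁻¹ * (β : ℂ) + -(A⁻¹ * ((β : ℂ) / B)) * A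
        + -(A⁻¹ * ((β : ℂ) / B)) * (β : ℂ) * ((‖ξ‖ ^ 2 : ℝ) : ℂ) = 0 := by
      linear_combination hcoef
    rw [this, zero_smul, add_zero]
  refine ⟨hA, hB, ⟨⟨_, _, key, key'⟩, rfl⟩, Matrix.inv_eq_right_inv key⟩
end
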